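/- The set R_w = w · r_w^{-1}(N_0(k_F)) equals the set of matrices (a_{ij}) ∈ GL_n(F) such that a_{ij} = 1 if w^{-1}(i) = j, a_{ij} = 0 if w^{-1}(i) < j, a_{ij} ∈ o_F if w^{-1}(i) > j and w(j) > i, and a_{ij} ∈ π_F o_F if w^{-1}(i) > j and w(j) < i. -/

import Mathlib

open Matrix

variable (p : ℕ) [Fact p.Prime] (F : Type) [Field F] [Algebra ℚ_[p] F]
  [FiniteDimensional ℚ_[p] F] [Algebra ℤ_[p] F] [IsScalarTower ℤ_[p] ℚ_[p] F]

/-- The ring of integers `o_F` of the finite extension `F` of `ℚ_p`. -/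
def oF : Set F := {x | x ∈ integralClosure ℤ_[p] F}

/-- The ideal `π_F o_F` of `o_F`, as a subset of `F`. -/
def piO (π : F) : Set F := {x | ∃ c ∈ oF p F, x = π * c}

/-- The permutation matrix of `w`, with `w_{ij} = 1` iff `w(j) = i`. -/
def permMat (n : ℕ) (w : Equiv.Perm (Fin n)) : Matrix (Fin n) (Fin n) F :=
  fun i j => if w j = i then 1 else 0

/-- `R_w`: the set of matrices `(a_{ij})` with `a_{ij} = 1` if `w⁻¹(i) = j`,
`a_{ij} = 0` if `w⁻¹(i) < j`, `a_{ij} ∈ o_F` if `w⁻¹(i) > j` and `w(j) > i`, and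
`a_{ij} ∈ π_F o_F` if `w⁻¹(i) > j` and `w(j) < i`. -/
def Rw (π : F) (n : ℕ) (w : Equiv.Perm (Fin n)) : Set (Matrix (Fin n) (Fin n) F) :=
  {a | ∀ i j : Fin n,
    (w⁻¹ i = j → a i j = 1) ∧
    (w⁻¹ i < j → a i j = 0) ∧
    (j < w⁻¹ i → i < w j → a i j ∈ oF p F) ∧
    (j < w⁻¹ i → w j < i → a i j ∈ piO p F π)}

/-- invertible upper triangular matrix (an element of the Borel `B`). -/
def IsBorel {n : ℕ} (b : Matrix (Fin n) (Fin n) F) : Prop :=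
  (∀ i j : Fin n, j < i → b i j = 0) ∧ (∀ i : Fin n, b i i ≠ 0)


lemma mulL {n : ℕ} (w : Equiv.Perm (Fin n)) (m : Matrix (Fin n) (Fin n) F) (i j : Fin n) :
    (permMat F n w * m) i j = m (w⁻¹ i) j := by
  simp [Matrix.mul_apply, permMat, Equiv.apply_eq_iff_eq_symm_apply, Equiv.Perm.inv_def]

lemma mulR {n : ℕ} (w : Equiv.Perm (Fin n)) (A : Matrix (Fin n) (Fin n) F) (i j : Fin n) :
    (A * permMat F n w⁻¹) i j = A i (w⁻¹ j) := by
  simp [Matrix.mul_apply, permMat, eq_comm]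

lemma oF_zero : (0 : F) ∈ oF p F :=
  show (0 : F) ∈ integralClosure ℤ_[p] F from Subalgebra.zero_mem _
lemma oF_one : (1 : F) ∈ oF p F :=
  show (1 : F) ∈ integralClosure ℤ_[p] F from Subalgebra.one_mem _
lemma oF_mul {x y : F} (hx : x ∈ oF p F) (hy : y ∈ oF p F) : x * y ∈ oF p F :=
  show x * y ∈ integralClosure ℤ_[p] F from Subalgebra.mul_mem _ hx hy
lemma piO_zero (π : F) : (0 : F) ∈ piO p F π := ⟨0, oF_zero p F, by ring⟩
lemma piO_subset_oF {π : F} (hπ : π ∈ oF p F) {x : F} (hx : x ∈ piO p F π) : x ∈ oF p F := by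
  obtain ⟨c, hc, rfl⟩ := hx
  exact oF_mul p F hπ hc

/-- `R_w = w · r_w⁻¹(N₀(k_F))` equals the explicit set above.  Here
`r_w⁻¹(N₀(k_F))` consists of the lower triangular unipotent matrices `m` with
entries in `o_F` such that `w m w⁻¹` reduces mod `π_F` to an upper triangular
unipotent matrix over the residue field, i.e. the below-diagonal entries of
`w m w⁻¹` lie in `π_F o_F`. -/
theorem stmt8 (n : ℕ) (π : F) (hπ : π ∈ oF p F)
    (hunif : ∀ x : F, x ≠ 0 →
      ∃ (m : ℤ) (u : F), u ∈ oF p F ∧ u⁻¹ ∈ oF p F ∧ x = u * π ^ m)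
    (w : Equiv.Perm (Fin n)) :
    {a : Matrix (Fin n) (Fin n) F | ∃ m : Matrix (Fin n) (Fin n) F,
        (∀ i : Fin n, m i i = 1) ∧ (∀ i j : Fin n, i < j → m i j = 0) ∧
        (∀ i j : Fin n, m i j ∈ oF p F) ∧
        (∀ i j : Fin n, j < i →
          (permMat F n w * m * permMat F n w⁻¹) i j ∈ piO p F π) ∧
        a = permMat F n w * m}
      = Rw p F π n w := by
  ext a
  constructor
  · rintro ⟨m, hdiag, hupper, hoF, hpi, rfl⟩
    intro i j
    refine ⟨fun h => ?_, fun h => ?_, fun h1 h2 => ?_, fun h1 h2 => ?_⟩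
    · rw [mulL, h, hdiag]
    · rw [mulL, hupper _ _ h]
    · rw [mulL]; exact hoF _ _
    · rw [mulL]
      have := hpi i (w j) h2
      rwa [mulR, Equiv.Perm.inv_def, Equiv.symm_apply_apply, mulL] at this
  · intro ha
    refine ⟨(fun i j => a (w i) j : Matrix (Fin n) (Fin n) F), fun i => ?_, fun i j hij => ?_, fun i j => ?_,
      fun i j hij => ?_, ?_⟩
    · exact (ha (w i) i).1 (w.symm_apply_apply i)
    · exact (ha (w i) j).2.1 (by rwa [Equiv.Perm.inv_def, Equiv.symm_apply_apply])
    · show a (w i) j ∈ oF p F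
      rcases lt_trichotomy i j with h | h | h
      · rw [(ha (w i) j).2.1 (by rwa [Equiv.Perm.inv_def, Equiv.symm_apply_apply])]; exact oF_zero p F
      · rw [h]; rw [(ha (w j) j).1 (w.symm_apply_apply j)]; exact oF_one p F
      · rcases lt_trichotomy (w j) (w i) with h2 | h2 | h2
        · exact piO_subset_oF p F hπ
            ((ha (w i) j).2.2.2 (by rwa [Equiv.Perm.inv_def, Equiv.symm_apply_apply]) h2)
        · exact absurd (w.injective h2) (ne_of_lt h)
        · exact (ha (w i) j).2.2.1 (by rwa [Equiv.Perm.inv_def, Equiv.symm_apply_apply]) h2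
    · rw [mulR]; erw [mulL]
      simp only [show w (w⁻¹ i) = i from w.apply_symm_apply i]
      rcases lt_trichotomy (w⁻¹ i) (w⁻¹ j) with h | h | h
      · rw [(ha i (w⁻¹ j)).2.1 h]; exact piO_zero p F π
      · exact absurd (w⁻¹.injective h) (ne_of_gt hij)
      · exact (ha i (w⁻¹ j)).2.2.2 h (by rwa [Equiv.Perm.inv_def, Equiv.apply_symm_apply])
    · ext i j
      erw [mulL]; simp only [show w (w⁻¹ i) = i from w.apply_symm_apply i]
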